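/- Let q = 3^m with m ≥ 1. Then the number of x ∈ F_q^* such that x, x+1, and x-1 are all nonzero squares in F_q is at most (q + 2√q + 9)/8. -/

import Mathlib

open Finset

section aux

variable {F : Type*} [Field F] [Fintype F] [DecidableEq F]

private lemma chi_nonneg (y : F) : (0:ℤ) ≤ 1 + quadraticChar F y := by
  rcases eq_or_ne y 0 with h | h
  · simp [h]
  · rcases quadraticChar_dichotomy h with h1 | h1 <;> rw [h1] <;> norm_num

private lemma sum_shift (h2 : ringChar F ≠ 2) (a : F) :
    ∑ x : F, quadraticChar F (x + a) = 0 := by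
  rw [← quadraticChar_sum_zero h2]
  exact Fintype.sum_equiv (Equiv.addRight a) _ _ (fun x => rfl)

private lemma sum_sq_chi (h2 : ringChar F ≠ 2) :
    ∑ y : F, quadraticChar F y * quadraticChar F y = (Fintype.card F : ℤ) - 1 := by
  have h : ∀ y : F, quadraticChar F y * quadraticChar F y = if y = 0 then 0 else 1 := by
    intro y
    rcases eq_or_ne y 0 with h | h
    · simp [h]
    · rw [if_neg h, ← pow_two]; exact quadraticChar_sq_one h
  rw [Finset.sum_congr rfl (fun y _ => h y)]
  have h' : ∀ y : F, (if y = 0 then (0:ℤ) else 1) = 1 - (if y = 0 then 1 else 0) := by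
    intro y; split <;> ring
  rw [Finset.sum_congr rfl (fun y _ => h' y), Finset.sum_sub_distrib, Finset.sum_const,
    Finset.sum_ite_eq' univ (0:F) (fun _ => (1:ℤ))]
  simp [card_univ]

private lemma sumA (h2 : ringChar F ≠ 2) {c : F} (hc : c ≠ 0) :
    ∑ x : F, quadraticChar F (x * (x + c)) = -1 := by
  rw [← Finset.sum_erase (f := fun x : F => quadraticChar F (x * (x + c))) univ
    (show quadraticChar F ((0:F) * ((0:F) + c)) = 0 by simp)]
  have h1 : ∑ x ∈ univ.erase (0:F), quadraticChar F (x * (x + c))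
      = ∑ x ∈ univ.erase (0:F), quadraticChar F (1 + c * x⁻¹) := by
    apply Finset.sum_congr rfl
    intro x hx
    have hx0 : x ≠ 0 := (Finset.mem_erase.mp hx).1
    have hxx : x * (x + c) = x ^ 2 * (1 + c * x⁻¹) := by field_simp
    rw [hxx, map_mul, quadraticChar_sq_one' hx0, one_mul]
  rw [h1]
  have h2' : ∑ x ∈ univ.erase (0:F), quadraticChar F (1 + c * x⁻¹)
      = ∑ y ∈ univ.erase (1:F), quadraticChar F y := by
    apply Finset.sum_nbij' (fun x => 1 + c * x⁻¹) (fun y => c * (y - 1)⁻¹)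
    · intro a ha
      have ha0 : a ≠ 0 := (Finset.mem_erase.mp ha).1
      refine Finset.mem_erase.mpr ⟨?_, mem_univ _⟩
      intro h
      have : c * a⁻¹ = 0 := by linear_combination h
      rcases mul_eq_zero.mp this with h' | h'
      · exact hc h'
      · exact ha0 (inv_eq_zero.mp h')
    · intro b hb
      have hb1 : b ≠ 1 := (Finset.mem_erase.mp hb).1
      refine Finset.mem_erase.mpr ⟨?_, mem_univ _⟩
      intro h
      rcases mul_eq_zero.mp h with h' | h'
      · exact hc h'
      · exact hb1 (by have := inv_eq_zero.mp h'; linear_combination this)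
    · intro a ha
      have ha0 : a ≠ 0 := (Finset.mem_erase.mp ha).1
      field_simp
      simp [hc]
    · intro b hb
      have hb1 : b ≠ 1 := (Finset.mem_erase.mp hb).1
      have : b - 1 ≠ 0 := sub_ne_zero_of_ne hb1
      field_simp
      ring
    · intro a _; rfl
  rw [h2', Finset.sum_erase_eq_sub (mem_univ (1:F)), quadraticChar_sum_zero h2]
  simp

private lemma sumB (h2 : ringChar F ≠ 2) {a b : F} (hab : a ≠ b) :
    ∑ x : F, quadraticChar F ((x + a) * (x + b)) = -1 := by
  have key : ∑ x : F, quadraticChar F ((x + a) * (x + b))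
      = ∑ y : F, quadraticChar F (y * (y + (b - a))) := by
    apply Fintype.sum_equiv (Equiv.addRight a)
    intro x
    simp only [Equiv.coe_addRight]
    congr 1
    ring
  rw [key]
  exact sumA h2 (sub_ne_zero_of_ne (Ne.symm hab))

private def phi (F : Type*) [Field F] : F → F := fun x => x ^ 3 - x

private lemma phi_add (h3 : (3:F) = 0) (a b : F) :
    phi F (a + b) = phi F a + phi F b := by
  unfold phi; linear_combination (a^2*b + a*b^2) * h3

private lemma phi_neg (a : F) : phi F (-a) = - phi F a := by unfold phi; ring

private lemma phi_zero : phi F 0 = 0 := by unfold phi; ring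

private lemma phi_one : phi F 1 = 0 := by unfold phi; ring

private lemma phi_negone : phi F (-1) = 0 := by unfold phi; ring

private lemma two_ne (h3 : (3:F) = 0) : (2:F) ≠ 0 := by
  intro h
  exact one_ne_zero (α := F) (by linear_combination h3 - h)

private lemma phi_eq_zero_iff (y : F) : phi F y = 0 ↔ y = 0 ∨ y = 1 ∨ y = -1 := by
  have hfac : phi F y = y * (y - 1) * (y + 1) := by unfold phi; ring
  rw [hfac, mul_eq_zero, mul_eq_zero, sub_eq_zero, add_eq_zero_iff_eq_neg, or_assoc]

private def Hset (F : Type*) [Field F] [Fintype F] [DecidableEq F] : Finset F :=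
  univ.image (phi F)

private lemma mem_Hset {t : F} : t ∈ Hset F ↔ ∃ a : F, phi F a = t := by
  simp [Hset, Finset.mem_image]

private lemma Hset_zero : (0:F) ∈ Hset F := mem_Hset.mpr ⟨0, phi_zero⟩

private lemma Hset_add (h3 : (3:F) = 0) {t s : F} (ht : t ∈ Hset F) (hs : s ∈ Hset F) :
    t + s ∈ Hset F := by
  obtain ⟨a, ha⟩ := mem_Hset.mp ht
  obtain ⟨b, hb⟩ := mem_Hset.mp hs
  exact mem_Hset.mpr ⟨a + b, by rw [phi_add h3, ha, hb]⟩

private lemma Hset_neg {t : F} (ht : t ∈ Hset F) : -t ∈ Hset F := by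
  obtain ⟨a, ha⟩ := mem_Hset.mp ht
  exact mem_Hset.mpr ⟨-a, by rw [phi_neg, ha]⟩

private lemma Hset_sub (h3 : (3:F) = 0) {t s : F} (ht : t ∈ Hset F) (hs : s ∈ Hset F) :
    t - s ∈ Hset F := by
  rw [sub_eq_add_neg]; exact Hset_add h3 ht (Hset_neg hs)

private lemma fiber_eq (h3 : (3:F) = 0) (a : F) :
    univ.filter (fun x : F => phi F x = phi F a) = {a, a + 1, a - 1} := by
  ext x
  simp only [mem_filter, mem_univ, true_and, mem_insert, mem_singleton]
  constructor
  · intro h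
    have h0 : phi F (x - a) = 0 := by
      have h1 := phi_add h3 (x - a) a
      rw [sub_add_cancel, h] at h1
      linear_combination - h1
    rcases (phi_eq_zero_iff _).mp h0 with h' | h' | h'
    · left; linear_combination h'
    · right; left; linear_combination h'
    · right; right; linear_combination h'
  · rintro (rfl | rfl | rfl)
    · rfl
    · rw [phi_add h3, phi_one, add_zero]
    · rw [sub_eq_add_neg, phi_add h3, phi_negone, add_zero]

private lemma fiber_card (h3 : (3:F) = 0) (a : F) :
    (univ.filter (fun x : F => phi F x = phi F a)).card = 3 := by
  rw [fiber_eq h3 a]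
  have h1 : a ≠ a + 1 := by
    intro h; exact one_ne_zero (α := F) (by linear_combination - h)
  have h2 : a ≠ a - 1 := by
    intro h; exact one_ne_zero (α := F) (by linear_combination h)
  have h12 : a + 1 ≠ a - 1 := by
    intro h; exact two_ne h3 (by linear_combination h)
  rw [Finset.card_insert_of_notMem (by simp [h1, h2]),
    Finset.card_insert_of_notMem (by simp [h12]), Finset.card_singleton]

private lemma fiber_card' (h3 : (3:F) = 0) {b : F} (hb : b ∈ univ.image (phi F)) :
    (univ.filter (fun a : F => phi F a = b)).card = 3 := by
  obtain ⟨a, -, ha⟩ := Finset.mem_image.mp hb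
  subst ha
  exact fiber_card h3 a

private lemma card_Hset (h3 : (3:F) = 0) : 3 * (Hset F).card = Fintype.card F := by
  have h2 : Fintype.card F = ∑ _b ∈ univ.image (phi F), 3 := by
    rw [← Finset.card_univ, Finset.card_eq_sum_card_image (phi F) univ]
    exact Finset.sum_congr rfl (fun b hb => fiber_card' h3 hb)
  rw [show Hset F = univ.image (phi F) from rfl, h2, Finset.sum_const, smul_eq_mul, mul_comm]

private lemma sum_comp_phi (h3 : (3:F) = 0) (g : F → ℤ) :
    ∑ x : F, g (phi F x) = 3 * ∑ t ∈ Hset F, g t := by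
  rw [Finset.sum_comp g (phi F), Finset.mul_sum]
  apply Finset.sum_congr rfl
  intro b hb
  rw [fiber_card' h3 hb]
  simp [mul_comm]

private def Ssum (F : Type*) [Field F] [Fintype F] [DecidableEq F] (c : F) : ℤ :=
  ∑ t ∈ Hset F, quadraticChar F (t + c)

private lemma Ssum_invariant (h3 : (3:F) = 0) {t : F} (ht : t ∈ Hset F) (c : F) :
    Ssum F (t + c) = Ssum F c := by
  unfold Ssum
  apply Finset.sum_nbij' (fun s => s + t) (fun s => s - t)
  · intro a ha; exact Hset_add h3 ha ht
  · intro a ha; exact Hset_sub h3 ha ht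
  · intro a _; ring
  · intro a _; ring
  · intro a _; congr 1; ring

private lemma Ssum_neg (c : F) :
    Ssum F (-c) = quadraticChar F (-1) * Ssum F c := by
  unfold Ssum
  rw [Finset.mul_sum]
  apply Finset.sum_nbij' (fun s => -s) (fun s => -s)
  · intro a ha; exact Hset_neg ha
  · intro a ha; exact Hset_neg ha
  · intro a _; ring
  · intro a _; ring
  · intro a _
    rw [← map_mul]
    congr 1
    ring

private lemma cover (h3 : (3:F) = 0) {c : F} (hc : c ∉ Hset F) (g : F → ℤ) :
    ∑ x : F, g x =
      ∑ t ∈ Hset F, g t + ∑ t ∈ Hset F, g (t + c) + ∑ t ∈ Hset F, g (t + -c) := by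
  have hinj : Function.Injective (fun x : F => x + c) := add_left_injective c
  have hinj' : Function.Injective (fun x : F => x + -c) := add_left_injective (-c)
  set H1 := (Hset F).image (fun x => x + c) with hH1
  set H2 := (Hset F).image (fun x => x + -c) with hH2
  have hd01 : Disjoint (Hset F) H1 := by
    rw [Finset.disjoint_left]
    intro t ht htm
    obtain ⟨s, hs, hst⟩ := Finset.mem_image.mp htm
    apply hc
    have : c = t - s := by linear_combination hst
    rw [this]; exact Hset_sub h3 ht hs
  have hd02 : Disjoint (Hset F) H2 := by
    rw [Finset.disjoint_left]
    intro t ht htm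
    obtain ⟨s, hs, hst⟩ := Finset.mem_image.mp htm
    apply hc
    have : c = s - t := by linear_combination - hst
    rw [this]; exact Hset_sub h3 hs ht
  have hd12 : Disjoint H1 H2 := by
    rw [Finset.disjoint_left]
    intro t htm htm'
    obtain ⟨s, hs, hst⟩ := Finset.mem_image.mp htm
    obtain ⟨u, hu, hut⟩ := Finset.mem_image.mp htm'
    apply hc
    have : c = -(u - s) := by linear_combination - hst + hut + c * h3
    rw [this]
    exact Hset_neg (Hset_sub h3 hu hs)
  have hcard1 : H1.card = (Hset F).card := Finset.card_image_of_injective _ hinj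
  have hcard2 : H2.card = (Hset F).card := Finset.card_image_of_injective _ hinj'
  have hU : Hset F ∪ H1 ∪ H2 = univ := by
    apply Finset.eq_univ_of_card
    rw [Finset.card_union_of_disjoint (by rw [Finset.disjoint_union_left]; exact ⟨hd02, hd12⟩),
      Finset.card_union_of_disjoint hd01, hcard1, hcard2, ← card_Hset h3]
    ring
  rw [← hU, Finset.sum_union (by rw [Finset.disjoint_union_left]; exact ⟨hd02, hd12⟩),
    Finset.sum_union hd01, Finset.sum_image (fun a _ b _ h => hinj h),
    Finset.sum_image (fun a _ b _ h => hinj' h)]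

private lemma innerSumQC (hr2 : ringChar F ≠ 2) (t s : F) :
    ∑ c : F, quadraticChar F ((t + c) * (s + c)) =
      if t = s then (Fintype.card F : ℤ) - 1 else -1 := by
  rcases eq_or_ne t s with rfl | hts
  · rw [if_pos rfl]
    have hmm : ∀ c : F, quadraticChar F ((t + c) * (t + c)) =
        quadraticChar F (t + c) * quadraticChar F (t + c) := fun c => map_mul _ _ _
    rw [Finset.sum_congr rfl (fun c _ => hmm c), ← sum_sq_chi hr2]
    exact Fintype.sum_equiv (Equiv.addLeft t) _ _ (fun c => rfl)
  · rw [if_neg hts]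
    have hmm : ∀ c : F, quadraticChar F ((t + c) * (s + c)) =
        quadraticChar F ((c + t) * (c + s)) := by
      intro c; congr 1; ring
    rw [Finset.sum_congr rfl (fun c _ => hmm c)]
    exact sumB hr2 hts

private lemma second_moment (h3 : (3:F) = 0) (hr2 : ringChar F ≠ 2) :
    ∑ c : F, (Ssum F c) ^ 2 =
      ((Hset F).card : ℤ) * ((Fintype.card F : ℤ) - (Hset F).card) := by
  have e1 : ∀ c : F, (Ssum F c) ^ 2 = ∑ t ∈ Hset F, ∑ s ∈ Hset F,
      quadraticChar F (t + c) * quadraticChar F (s + c) := by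
    intro c; rw [sq]; exact Finset.sum_mul_sum _ _ _ _
  calc ∑ c : F, (Ssum F c) ^ 2
      = ∑ c : F, ∑ t ∈ Hset F, ∑ s ∈ Hset F,
          quadraticChar F (t + c) * quadraticChar F (s + c) :=
        Finset.sum_congr rfl fun c _ => e1 c
    _ = ∑ t ∈ Hset F, ∑ c : F, ∑ s ∈ Hset F,
          quadraticChar F (t + c) * quadraticChar F (s + c) := Finset.sum_comm
    _ = ∑ t ∈ Hset F, ∑ s ∈ Hset F, ∑ c : F,
          quadraticChar F (t + c) * quadraticChar F (s + c) :=
        Finset.sum_congr rfl fun t _ => Finset.sum_comm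
    _ = ∑ t ∈ Hset F, ∑ s ∈ Hset F, (if t = s then (Fintype.card F : ℤ) - 1 else -1) := by
        refine Finset.sum_congr rfl fun t _ => Finset.sum_congr rfl fun s _ => ?_
        rw [← innerSumQC hr2 t s]
        exact Finset.sum_congr rfl fun c _ => (map_mul _ _ _).symm
    _ = ∑ _t ∈ Hset F, ((Fintype.card F : ℤ) - (Hset F).card) := by
        refine Finset.sum_congr rfl fun t ht => ?_
        have hsplit : ∀ s ∈ Hset F, (if t = s then (Fintype.card F : ℤ) - 1 else -1)
            = (if t = s then (Fintype.card F : ℤ) else 0) + (-1) := by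
          intro s _; split <;> ring
        rw [Finset.sum_congr rfl hsplit, Finset.sum_add_distrib,
          Finset.sum_ite_eq _ t _, if_pos ht, Finset.sum_const]
        simp only [nsmul_eq_mul]
        ring
    _ = _ := by
        rw [Finset.sum_const]
        simp only [nsmul_eq_mul]

private lemma T_bound (h3 : (3:F) = 0) (hr2 : ringChar F ≠ 2) :
    (∑ x : F, quadraticChar F (phi F x)) ^ 2 ≤ 4 * (Fintype.card F : ℤ) := by
  have hq3 : 3 * (Hset F).card = Fintype.card F := card_Hset h3
  have hHpos : 0 < (Hset F).card := Finset.card_pos.mpr ⟨0, Hset_zero⟩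
  have hqpos : 0 < Fintype.card F := Fintype.card_pos
  have hex : ∃ c₀ : F, c₀ ∉ Hset F := by
    by_contra hall
    push_neg at hall
    have huniv : Hset F = univ := Finset.eq_univ_iff_forall.mpr hall
    rw [huniv, Finset.card_univ] at hq3
    omega
  obtain ⟨c₀, hc₀⟩ := hex
  set S0 := Ssum F 0 with hS0def
  set S1 := Ssum F c₀ with hS1def
  set S2 := Ssum F (-c₀) with hS2def
  have e0 : ∑ t ∈ Hset F, quadraticChar F t = S0 := by
    rw [hS0def]
    unfold Ssum
    exact Finset.sum_congr rfl fun t _ => by rw [add_zero]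
  have hsum0 : S0 + S1 + S2 = 0 := by
    have h := cover h3 hc₀ (fun x => (quadraticChar F x : ℤ))
    rw [quadraticChar_sum_zero hr2] at h
    rw [e0] at h
    have e1 : ∑ t ∈ Hset F, quadraticChar F (t + c₀) = S1 := by
      rw [hS1def]; rfl
    have e2 : ∑ t ∈ Hset F, quadraticChar F (t + -c₀) = S2 := by
      rw [hS2def]; rfl
    rw [e1, e2] at h
    linarith [h]
  have hcoset : ∑ c : F, (Ssum F c) ^ 2 = ((Hset F).card : ℤ) * (S0^2 + S1^2 + S2^2) := by
    rw [cover h3 hc₀ (fun x => (Ssum F x) ^ 2)]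
    have e0' : ∀ t ∈ Hset F, (Ssum F t) ^ 2 = S0 ^ 2 := by
      intro t ht
      have h := Ssum_invariant h3 ht 0
      rw [add_zero] at h
      rw [h]
    have e1' : ∀ t ∈ Hset F, (Ssum F (t + c₀)) ^ 2 = S1 ^ 2 := fun t ht => by
      rw [Ssum_invariant h3 ht c₀]
    have e2' : ∀ t ∈ Hset F, (Ssum F (t + -c₀)) ^ 2 = S2 ^ 2 := fun t ht => by
      rw [Ssum_invariant h3 ht (-c₀)]
    rw [Finset.sum_congr rfl e0', Finset.sum_congr rfl e1', Finset.sum_congr rfl e2',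
      Finset.sum_const, Finset.sum_const, Finset.sum_const]
    simp only [nsmul_eq_mul]
    ring
  have hkey : S0 ^ 2 + S1 ^ 2 + S2 ^ 2 = (Fintype.card F : ℤ) - (Hset F).card := by
    have hne : ((Hset F).card : ℤ) ≠ 0 := by exact_mod_cast hHpos.ne'
    apply mul_left_cancel₀ hne
    rw [← hcoset, second_moment h3 hr2]
  have hS2 : S2 = quadraticChar F (-1) * S1 := Ssum_neg c₀
  have hT : ∑ x : F, quadraticChar F (phi F x) = 3 * S0 := by
    rw [sum_comp_phi h3, e0]
  have hq3' : (3:ℤ) * (Hset F).card = (Fintype.card F : ℤ) := by exact_mod_cast hq3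
  have h9 : 9 * S0 ^ 2 ≤ 4 * (Fintype.card F : ℤ) := by
    rcases quadraticChar_dichotomy (show (-1:F) ≠ 0 from neg_ne_zero.mpr one_ne_zero) with hε | hε
    · rw [hε, one_mul] at hS2
      have hS0e : S0 = -2 * S1 := by rw [hS2] at hsum0; linarith
      have hS0sq : S0 ^ 2 = 4 * S1 ^ 2 := by rw [hS0e]; ring
      have hS2sq : S2 ^ 2 = S1 ^ 2 := by rw [hS2]
      linarith
    · rw [hε] at hS2
      have hS0z : S0 = 0 := by rw [hS2] at hsum0; linarith
      rw [hS0z]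
      have : (0:ℤ) ≤ (Fintype.card F : ℤ) := by positivity
      linarith
  rw [hT]
  linarith [h9, show (3 * S0) ^ 2 = 9 * S0 ^ 2 from by ring]

private lemma count_bound (h3 : (3:F) = 0) (hr2 : ringChar F ≠ 2) :
    8 * ((Nat.card {x : F // x ≠ 0 ∧ IsSquare x ∧ x + 1 ≠ 0 ∧ IsSquare (x + 1) ∧
        x - 1 ≠ 0 ∧ IsSquare (x - 1)}) : ℤ)
      ≤ (Fintype.card F : ℤ) - 3 + ∑ x : F, quadraticChar F (phi F x) := by
  classical
  set P : F → Prop := fun x => x ≠ 0 ∧ IsSquare x ∧ x + 1 ≠ 0 ∧ IsSquare (x + 1) ∧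
      x - 1 ≠ 0 ∧ IsSquare (x - 1) with hP
  have hN : (Nat.card {x : F // P x}) = (univ.filter P).card := by
    rw [Nat.card_eq_fintype_card, Fintype.card_subtype]
  set f : F → ℤ := fun x => (1 + quadraticChar F x) * (1 + quadraticChar F (x + 1)) *
      (1 + quadraticChar F (x - 1)) with hf
  have hsumf : ∑ x : F, f x =
      (Fintype.card F : ℤ) - 3 + ∑ x : F, quadraticChar F (phi F x) := by
    have expand : ∀ x : F, f x = 1 + quadraticChar F x + quadraticChar F (x + 1)
        + quadraticChar F (x - 1)
        + quadraticChar F x * quadraticChar F (x + 1)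
        + quadraticChar F x * quadraticChar F (x - 1)
        + quadraticChar F (x + 1) * quadraticChar F (x - 1)
        + quadraticChar F x * quadraticChar F (x + 1) * quadraticChar F (x - 1) := by
      intro x; rw [hf]; ring
    rw [Finset.sum_congr rfl (fun x _ => expand x), Finset.sum_add_distrib,
      Finset.sum_add_distrib, Finset.sum_add_distrib, Finset.sum_add_distrib,
      Finset.sum_add_distrib, Finset.sum_add_distrib, Finset.sum_add_distrib]
    have p1 : ∑ _x : F, (1:ℤ) = (Fintype.card F : ℤ) := by
      rw [Finset.sum_const, Finset.card_univ]; simp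
    have p2 : ∑ x : F, quadraticChar F x = 0 := quadraticChar_sum_zero hr2
    have p3 : ∑ x : F, quadraticChar F (x + 1) = 0 := sum_shift hr2 1
    have p4 : ∑ x : F, quadraticChar F (x - 1) = 0 := by
      rw [Finset.sum_congr rfl (fun x _ => by rw [sub_eq_add_neg] :
        ∀ x ∈ univ, quadraticChar F (x - 1) = quadraticChar F (x + -1))]
      exact sum_shift hr2 (-1)
    have p5 : ∑ x : F, quadraticChar F x * quadraticChar F (x + 1) = -1 := by
      have e : ∀ x : F, quadraticChar F x * quadraticChar F (x + 1)
          = quadraticChar F ((x + 0) * (x + 1)) := by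
        intro x; rw [← map_mul]; congr 1; ring
      rw [Finset.sum_congr rfl (fun x _ => e x)]
      exact sumB hr2 (zero_ne_one)
    have p6 : ∑ x : F, quadraticChar F x * quadraticChar F (x - 1) = -1 := by
      have e : ∀ x : F, quadraticChar F x * quadraticChar F (x - 1)
          = quadraticChar F ((x + 0) * (x + -1)) := by
        intro x; rw [← map_mul]; congr 1; ring
      rw [Finset.sum_congr rfl (fun x _ => e x)]
      exact sumB hr2 (Ne.symm (neg_ne_zero.mpr one_ne_zero))
    have p7 : ∑ x : F, quadraticChar F (x + 1) * quadraticChar F (x - 1) = -1 := by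
      have e : ∀ x : F, quadraticChar F (x + 1) * quadraticChar F (x - 1)
          = quadraticChar F ((x + 1) * (x + -1)) := by
        intro x; rw [← map_mul]; congr 1; ring
      rw [Finset.sum_congr rfl (fun x _ => e x)]
      refine sumB hr2 ?_
      intro h
      exact two_ne h3 (by linear_combination h)
    have p8 : ∑ x : F, quadraticChar F x * quadraticChar F (x + 1) * quadraticChar F (x - 1)
        = ∑ x : F, quadraticChar F (phi F x) := by
      refine Finset.sum_congr rfl fun x _ => ?_
      rw [← map_mul, ← map_mul]
      congr 1
      unfold phi; ring
    rw [p1, p2, p3, p4, p5, p6, p7, p8]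
    ring
  have hfP : ∀ x ∈ univ.filter P, f x = 8 := by
    intro x hx
    obtain ⟨h0, hs, h1, hs1, h2, hs2⟩ := (Finset.mem_filter.mp hx).2
    simp only [hf]
    rw [(quadraticChar_one_iff_isSquare h0).mpr hs,
      (quadraticChar_one_iff_isSquare h1).mpr hs1,
      (quadraticChar_one_iff_isSquare h2).mpr hs2]
    norm_num
  have hle : ∑ x ∈ univ.filter P, f x ≤ ∑ x : F, f x := by
    refine Finset.sum_le_sum_of_subset_of_nonneg (Finset.subset_univ _) (fun x _ _ => ?_)
    rw [hf]
    exact mul_nonneg (mul_nonneg (chi_nonneg x) (chi_nonneg (x + 1))) (chi_nonneg (x - 1))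
  rw [Finset.sum_congr rfl hfP, Finset.sum_const, nsmul_eq_mul, hsumf] at hle
  rw [hN]
  linarith

end aux

theorem card_three_squares_le (m q : ℕ) (hm : 0 < m) (hq : q = 3 ^ m)
    (F : Type*) [Field F] [Fintype F] (hF : Fintype.card F = q) :
    (Nat.card {x : F // x ≠ 0 ∧ IsSquare x ∧ x + 1 ≠ 0 ∧ IsSquare (x + 1) ∧
        x - 1 ≠ 0 ∧ IsSquare (x - 1)} : ℝ)
      ≤ (q + 2 * Real.sqrt q + 9) / 8 := by
  classical
  haveI := ringChar.charP F
  have hp : (ringChar F).Prime := CharP.char_is_prime F (ringChar F)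
  obtain ⟨n, hpr, hcard⟩ := FiniteField.card F (ringChar F)
  have hdvd : ringChar F ∣ 3 ^ m := by
    rw [← hq, ← hF, hcard]
    exact dvd_pow_self _ n.2.ne'
  have hchar3 : ringChar F = 3 :=
    (Nat.prime_dvd_prime_iff_eq hp Nat.prime_three).mp (hp.dvd_of_dvd_pow hdvd)
  have h3 : (3:F) = 0 := by
    have h := ringChar.Nat.cast_ringChar (R := F)
    rw [hchar3] at h
    exact_mod_cast h
  have hr2 : ringChar F ≠ 2 := by rw [hchar3]; norm_num
  have hcb := count_bound h3 hr2
  have hTb := T_bound h3 hr2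
  set T : ℤ := ∑ x : F, quadraticChar F (phi F x) with hT
  set N : ℕ := Nat.card {x : F // x ≠ 0 ∧ IsSquare x ∧ x + 1 ≠ 0 ∧ IsSquare (x + 1) ∧
      x - 1 ≠ 0 ∧ IsSquare (x - 1)} with hNdef
  rw [hF] at hcb hTb
  have hq0 : (0:ℝ) ≤ (q:ℝ) := by positivity
  have hcbR : 8 * (N:ℝ) ≤ (q:ℝ) - 3 + (T:ℝ) := by exact_mod_cast hcb
  have hTbR : ((T:ℝ)) ^ 2 ≤ 4 * (q:ℝ) := by exact_mod_cast hTb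
  have hTle : (T:ℝ) ≤ 2 * Real.sqrt q := by
    have h1 : (T:ℝ) ≤ |(T:ℝ)| := le_abs_self _
    have h2 : |(T:ℝ)| = Real.sqrt ((T:ℝ) ^ 2) := (Real.sqrt_sq_eq_abs _).symm
    have h4 : Real.sqrt ((T:ℝ) ^ 2) ≤ Real.sqrt (4 * q) := Real.sqrt_le_sqrt hTbR
    have h5 : Real.sqrt (4 * (q:ℝ)) = 2 * Real.sqrt q := by
      rw [show (4:ℝ) * (q:ℝ) = (2:ℝ) ^ 2 * q by ring, Real.sqrt_mul (by positivity) _,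
        Real.sqrt_sq (by norm_num)]
    linarith
  have hsq : (0:ℝ) ≤ Real.sqrt q := Real.sqrt_nonneg _
  linarith
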